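/- Suppose a measurable kernel k : ℝ₊ × ℝⁿ × ℝⁿ → ℂ satisfies |k_{t-s}(x,y)| ≤ C (√(t-s) + |x-y|)^{-n-1}. Then for all t > 0 and x ∈ ℝⁿ the integral I₂(t,x) = ∫_{t/2}^{t} ∫_{B(x,√t)} |k_{t-s}(x,y)| · |α(s,y)| dy ds satisfies I₂(t,x) ≤ C' √t ‖α‖_{L^∞}, where ‖α‖_{L^∞} = esssup |α|. -/

import Mathlib

open MeasureTheory Metric
open scoped ENNReal NNReal

lemma scaling_aux (n : ℕ) {a : ℝ} (ha : 0 < a) (x : EuclideanSpace ℝ (Fin n)) :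
    (∫⁻ y : EuclideanSpace ℝ (Fin n), ENNReal.ofReal ((a + dist x y) ^ (-((n:ℝ)+1)))) =
      ENNReal.ofReal a⁻¹ *
        ∫⁻ z : EuclideanSpace ℝ (Fin n), ENNReal.ofReal ((1 + ‖z‖) ^ (-((n:ℝ)+1))) := by
  have hmeas : Measurable fun z : EuclideanSpace ℝ (Fin n) => ENNReal.ofReal ((a + ‖z‖) ^ (-((n:ℝ)+1))) := by fun_prop
  have h0 : (∫⁻ y : EuclideanSpace ℝ (Fin n), ENNReal.ofReal ((a + dist x y) ^ (-((n:ℝ)+1)))) =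
      ∫⁻ z : EuclideanSpace ℝ (Fin n), ENNReal.ofReal ((a + ‖z‖) ^ (-((n:ℝ)+1))) := by
    rw [← (MeasureTheory.measurePreserving_sub_right (volume : Measure (EuclideanSpace ℝ (Fin n))) x).lintegral_comp hmeas]
    simp_rw [dist_eq_norm']
  rw [h0]
  have hmap := Measure.map_addHaar_smul (volume : Measure (EuclideanSpace ℝ (Fin n))) (ne_of_gt ha)
  rw [finrank_euclideanSpace_fin] at hmap
  have h1 : (ENNReal.ofReal (a ^ n)) • Measure.map (a • ·) (volume : Measure (EuclideanSpace ℝ (Fin n))) = volume := by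
    rw [hmap, smul_smul, abs_of_pos (inv_pos.2 (pow_pos ha n)), ← ENNReal.ofReal_mul (pow_nonneg ha.le n),
      mul_inv_cancel₀ (pow_pos ha n).ne', ENNReal.ofReal_one, one_smul]
  calc (∫⁻ z : EuclideanSpace ℝ (Fin n), ENNReal.ofReal ((a + ‖z‖) ^ (-((n:ℝ)+1))))
      = ∫⁻ z, ENNReal.ofReal ((a + ‖z‖) ^ (-((n:ℝ)+1)))
          ∂((ENNReal.ofReal (a ^ n)) • Measure.map (a • ·) (volume : Measure (EuclideanSpace ℝ (Fin n)))) := by rw [h1]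
    _ = ENNReal.ofReal (a ^ n) * ∫⁻ z, ENNReal.ofReal ((a + ‖z‖) ^ (-((n:ℝ)+1)))
          ∂(Measure.map (a • ·) (volume : Measure (EuclideanSpace ℝ (Fin n)))) := by
        rw [lintegral_smul_measure, smul_eq_mul]
    _ = ENNReal.ofReal (a ^ n) * ∫⁻ z : EuclideanSpace ℝ (Fin n), ENNReal.ofReal ((a + ‖a • z‖) ^ (-((n:ℝ)+1))) := by
        rw [lintegral_map hmeas (measurable_const_smul a)]
    _ = ENNReal.ofReal a⁻¹ * ∫⁻ z : EuclideanSpace ℝ (Fin n), ENNReal.ofReal ((1 + ‖z‖) ^ (-((n:ℝ)+1))) := by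
        have : ∀ z : EuclideanSpace ℝ (Fin n), ENNReal.ofReal ((a + ‖a • z‖) ^ (-((n:ℝ)+1)))
            = ENNReal.ofReal (a ^ (-((n:ℝ)+1))) * ENNReal.ofReal ((1 + ‖z‖) ^ (-((n:ℝ)+1))) := by
          intro z
          have hz : a + ‖a • z‖ = a * (1 + ‖z‖) := by
            rw [norm_smul, Real.norm_eq_abs, abs_of_pos ha]; ring
          rw [hz, Real.mul_rpow ha.le (by positivity), ENNReal.ofReal_mul (by positivity)]
        simp_rw [this]
        rw [lintegral_const_mul' _ _ ENNReal.ofReal_ne_top, ← mul_assoc,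
          ← ENNReal.ofReal_mul (pow_nonneg ha.le n)]
        congr 2
        rw [← Real.rpow_natCast a n, ← Real.rpow_add ha]
        norm_num
        rw [Real.rpow_neg_one]

lemma J_bound_aux {t : ℝ} (ht : 0 < t) :
    (∫⁻ s in Set.Ioc (t/2) t, ENNReal.ofReal ((Real.sqrt (t - s))⁻¹))
      ≤ ENNReal.ofReal (2 * Real.sqrt t) := by
  have h1 : (∫⁻ s in Set.Ioc (t/2) t, ENNReal.ofReal ((Real.sqrt (t - s))⁻¹))
      = ∫⁻ s in Set.Ioc (t/2) t, ENNReal.ofReal ((t - s) ^ (-(1/2) : ℝ)) := by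
    refine setLIntegral_congr_fun measurableSet_Ioc (fun s hs => ?_)
    congr 1
    rw [Real.rpow_neg (by linarith [hs.2]), Real.sqrt_eq_rpow]
  rw [h1]
  have hmp := (Measure.measurePreserving_sub_left (volume : Measure ℝ) t)
  have hpre : (fun s : ℝ => t - s) ⁻¹' Set.Ico 0 (t/2) = Set.Ioc (t/2) t := by
    ext s
    simp only [Set.mem_preimage, Set.mem_Ico, Set.mem_Ioc]
    constructor <;> intro h <;> constructor <;> linarith [h.1, h.2]
  have h2 : (∫⁻ s in Set.Ioc (t/2) t, ENNReal.ofReal ((t - s) ^ (-(1/2) : ℝ)))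
      = ∫⁻ u in Set.Ico 0 (t/2), ENNReal.ofReal (u ^ (-(1/2) : ℝ)) := by
    rw [← hpre]
    exact hmp.setLIntegral_comp_preimage_emb (MeasurableEquiv.subLeft t).measurableEmbedding
      (fun u => ENNReal.ofReal (u ^ (-(1/2) : ℝ))) _
  rw [h2, Measure.restrict_congr_set Ico_ae_eq_Ioc]
  have hint : IntegrableOn (fun u : ℝ => u ^ (-(1/2) : ℝ)) (Set.Ioc 0 (t/2)) := by
    rw [← intervalIntegrable_iff_integrableOn_Ioc_of_le (by linarith)]
    exact intervalIntegral.intervalIntegrable_rpow' (by norm_num)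
  rw [← ofReal_integral_eq_lintegral_ofReal hint ?nn]
  case nn =>
    filter_upwards [ae_restrict_mem measurableSet_Ioc] with u hu
    exact Real.rpow_nonneg hu.1.le _
  refine ENNReal.ofReal_le_ofReal ?_
  have key : ∫ u in Set.Ioc 0 (t/2), u ^ (-(1/2) : ℝ) = 2 * (t/2) ^ ((1:ℝ)/2) := by
    rw [← intervalIntegral.integral_of_le (by linarith)]
    rw [_root_.integral_rpow (Or.inl (by norm_num))]
    rw [Real.zero_rpow (by norm_num)]
    norm_num
    ring
  rw [key]
  have : ((t/2) : ℝ) ^ ((1:ℝ)/2) ≤ Real.sqrt t := by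
    rw [← Real.sqrt_eq_rpow]
    exact Real.sqrt_le_sqrt (by linarith)
  linarith


/-- Under the kernel bound `|k_τ(x,y)| ≤ C(√τ + |x-y|)^{-n-1}`, the middle term
`I₂(t,x) = ∫_{t/2}^t ∫_{B(x,√t)} |k_{t-s}(x,y)||α(s,y)| dy ds` is bounded by
`C' √t ‖α‖_{L^∞}`. -/
theorem I2_estimate (n : ℕ) (C : ℝ) (hC : 0 < C)
    (k : ℝ → EuclideanSpace ℝ (Fin n) → EuclideanSpace ℝ (Fin n) → ℂ)
    (hk : ∀ (τ : ℝ) (x y : EuclideanSpace ℝ (Fin n)), 0 < τ →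
      ‖k τ x y‖ ≤ C * (Real.sqrt τ + dist x y) ^ (-((n:ℝ) + 1))) :
    ∃ C' : ℝ, 0 < C' ∧
      ∀ (α : ℝ × EuclideanSpace ℝ (Fin n) → ℂ) (t : ℝ) (x : EuclideanSpace ℝ (Fin n)),
        0 < t →
        (∫⁻ s in Set.Ioc (t/2) t, ∫⁻ y in ball x (Real.sqrt t),
            ENNReal.ofReal (‖k (t - s) x y‖ * ‖α (s, y)‖))
          ≤ ENNReal.ofReal (C' * Real.sqrt t) * eLpNorm α ⊤ volume := by
  set K : ℝ≥0∞ := ∫⁻ z : EuclideanSpace ℝ (Fin n), ENNReal.ofReal ((1 + ‖z‖) ^ (-((n:ℝ)+1)))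
    with hKdef
  have hKlt : K < ⊤ :=
    finite_integral_one_add_norm (E := EuclideanSpace ℝ (Fin n)) (μ := volume)
      (r := (n:ℝ)+1) (by simp [finrank_euclideanSpace_fin])
  set C' : ℝ := max 1 (2 * C * K.toReal) with hC'def
  refine ⟨C', lt_max_of_lt_left one_pos, fun α t x ht => ?_⟩
  set M : ℝ≥0∞ := eLpNorm α ⊤ volume with hMdef
  by_cases hM : M = ⊤
  · rw [hM, ENNReal.mul_top]
    · exact le_top
    · refine (ENNReal.ofReal_pos.2 ?_).ne'
      have : (0:ℝ) < C' := lt_max_of_lt_left one_pos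
      positivity
  -- a.e. bound on α
  have hα : ∀ᵐ s : ℝ, ∀ᵐ y : EuclideanSpace ℝ (Fin n), (‖α (s, y)‖₊ : ℝ≥0∞) ≤ M := by
    have h : ∀ᵐ z ∂((volume : Measure ℝ).prod (volume : Measure (EuclideanSpace ℝ (Fin n)))),
        (‖α z‖₊ : ℝ≥0∞) ≤ M := by
      rw [← Measure.volume_eq_prod, hMdef, eLpNorm_exponent_top]
      exact ae_le_eLpNormEssSup
    exact Measure.ae_ae_of_ae_prod h
  set c : ℝ≥0∞ := ENNReal.ofReal C * K * M with hcdef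
  have hc : c ≠ ⊤ := by
    exact ENNReal.mul_ne_top (ENNReal.mul_ne_top ENNReal.ofReal_ne_top hKlt.ne) hM
  calc (∫⁻ s in Set.Ioc (t/2) t, ∫⁻ y in ball x (Real.sqrt t),
          ENNReal.ofReal (‖k (t - s) x y‖ * ‖α (s, y)‖))
      = ∫⁻ s in Set.Ioo (t/2) t, ∫⁻ y in ball x (Real.sqrt t),
          ENNReal.ofReal (‖k (t - s) x y‖ * ‖α (s, y)‖) := by
        rw [Measure.restrict_congr_set Ioo_ae_eq_Ioc]
    _ ≤ ∫⁻ s in Set.Ioo (t/2) t, ENNReal.ofReal ((Real.sqrt (t - s))⁻¹) * c := by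
        refine lintegral_mono_ae ?_
        filter_upwards [ae_restrict_mem measurableSet_Ioo, ae_restrict_of_ae hα] with s hs hαs
        have hτ : 0 < t - s := by linarith [hs.2]
        have hker : (∫⁻ y in ball x (Real.sqrt t), ENNReal.ofReal ‖k (t - s) x y‖)
            ≤ ENNReal.ofReal C * (ENNReal.ofReal ((Real.sqrt (t - s))⁻¹) * K) := by
          have hstep : (∫⁻ y in ball x (Real.sqrt t), ENNReal.ofReal ‖k (t - s) x y‖)
              ≤ ∫⁻ y : EuclideanSpace ℝ (Fin n),
                  ENNReal.ofReal (C * (Real.sqrt (t - s) + dist x y) ^ (-((n:ℝ)+1))) := by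
            refine le_trans (lintegral_mono fun y => ENNReal.ofReal_le_ofReal (hk _ x y hτ)) ?_
            exact setLIntegral_le_lintegral _ _
          refine hstep.trans ?_
          have : ∀ y : EuclideanSpace ℝ (Fin n),
              ENNReal.ofReal (C * (Real.sqrt (t - s) + dist x y) ^ (-((n:ℝ)+1)))
              = ENNReal.ofReal C
                * ENNReal.ofReal ((Real.sqrt (t - s) + dist x y) ^ (-((n:ℝ)+1))) :=
            fun y => ENNReal.ofReal_mul hC.le
          simp_rw [this]
          rw [lintegral_const_mul' _ _ ENNReal.ofReal_ne_top,
            scaling_aux n (Real.sqrt_pos.2 hτ) x]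
        calc (∫⁻ y in ball x (Real.sqrt t), ENNReal.ofReal (‖k (t - s) x y‖ * ‖α (s, y)‖))
            ≤ ∫⁻ y in ball x (Real.sqrt t), ENNReal.ofReal ‖k (t - s) x y‖ * M := by
              refine lintegral_mono_ae ?_
              filter_upwards [ae_restrict_of_ae hαs] with y hy
              rw [ENNReal.ofReal_mul (norm_nonneg _), ofReal_norm (α (s, y)), enorm_eq_nnnorm]
              exact mul_le_mul_right hy _
          _ = (∫⁻ y in ball x (Real.sqrt t), ENNReal.ofReal ‖k (t - s) x y‖) * M :=
              lintegral_mul_const' M _ hM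
          _ ≤ (ENNReal.ofReal C * (ENNReal.ofReal ((Real.sqrt (t - s))⁻¹) * K)) * M :=
              mul_le_mul_left hker M
          _ = ENNReal.ofReal ((Real.sqrt (t - s))⁻¹) * c := by rw [hcdef]; ring
    _ = (∫⁻ s in Set.Ioo (t/2) t, ENNReal.ofReal ((Real.sqrt (t - s))⁻¹)) * c :=
        lintegral_mul_const' c _ hc
    _ = (∫⁻ s in Set.Ioc (t/2) t, ENNReal.ofReal ((Real.sqrt (t - s))⁻¹)) * c := by
        rw [Measure.restrict_congr_set Ioo_ae_eq_Ioc]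
    _ ≤ ENNReal.ofReal (2 * Real.sqrt t) * c := mul_le_mul_left (J_bound_aux ht) c
    _ ≤ ENNReal.ofReal (C' * Real.sqrt t) * M := by
        rw [hcdef, ← ENNReal.ofReal_toReal hKlt.ne, ← mul_assoc, ← mul_assoc,
          ← ENNReal.ofReal_mul (by positivity), ← ENNReal.ofReal_mul (by positivity)]
        refine mul_le_mul_left (ENNReal.ofReal_le_ofReal ?_) M
        have h1 : 2 * C * K.toReal ≤ C' := le_max_right _ _
        have h2 : (0:ℝ) ≤ Real.sqrt t := Real.sqrt_nonneg t
        nlinarith [Real.sqrt_nonneg t]
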